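/- Fix an integer m ≥ 2 and a real number B > 0. The set of substitutions σ over an m-letter alphabet whose incidence matrix M_σ is primitive and all of whose complex eigenvalues have modulus at most B is finite, and its cardinality is strictly less than m^(m⁴ · B^(2(m−1)²+2)) (where the exponent is a real number and the power is a real power). -/

import Mathlib

open Matrix Polynomial

section Aux

lemma aux_pos_pos_of_mul_pos {a b : ℤ} (ha : 0 ≤ a) (hb : 0 ≤ b) (h : 0 < a * b) :
    0 < a ∧ 0 < b := by
  refine ⟨ha.lt_of_ne ?_, hb.lt_of_ne ?_⟩ <;> rintro rfl <;> simp at h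

lemma aux_pow_entry_nonneg {m : ℕ} {A : Matrix (Fin m) (Fin m) ℤ} (hA : ∀ i j, 0 ≤ A i j) :
    ∀ n i j, 0 ≤ (A ^ n) i j := by
  intro n
  induction n with
  | zero => intro i j; by_cases h : i = j <;> simp [h, Matrix.one_apply]
  | succ n ih =>
    intro i j
    rw [pow_succ, Matrix.mul_apply]
    exact Finset.sum_nonneg fun l _ => mul_nonneg (ih i l) (hA l j)

lemma aux_isRoot_charpoly_iff_mem_spectrum {m : ℕ} (M : Matrix (Fin m) (Fin m) ℂ) (z : ℂ) :
    M.charpoly.IsRoot z ↔ z ∈ spectrum ℂ M := by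
  have h1 : Polynomial.eval z M.charpoly = ((charmatrix M).map (Polynomial.evalRingHom z)).det := by
    rw [Matrix.charpoly, ← RingHom.mapMatrix_apply, ← RingHom.map_det]
    rfl
  have h2 : (charmatrix M).map (Polynomial.evalRingHom z) = (algebraMap ℂ _ z) - M := by
    ext i j
    by_cases h : i = j <;> simp [h, charmatrix_apply, Matrix.algebraMap_matrix_apply,
      Matrix.diagonal_apply, Matrix.map_apply, Matrix.sub_apply]
  rw [spectrum.mem_iff, Polynomial.IsRoot, h1, h2]
  constructor
  · intro hdet hu
    have := (Matrix.isUnit_iff_isUnit_det _).mp hu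
    rw [hdet] at this
    exact (not_isUnit_zero : ¬ IsUnit (0:ℂ)) this
  · intro hnu
    by_contra hdet
    exact hnu ((Matrix.isUnit_iff_isUnit_det _).mpr (isUnit_iff_ne_zero.mpr hdet))

lemma aux_trace_pow_bound {m : ℕ} (A : Matrix (Fin m) (Fin m) ℤ) (B : ℝ)
    (hroots : ∀ z : ℂ, ((A.charpoly).map (algebraMap ℤ ℂ)).IsRoot z → ‖z‖ ≤ B)
    (n : ℕ) (hn : 0 < n) :
    ‖(((A ^ n).trace : ℤ) : ℂ)‖ ≤ m * B ^ n := by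
  set C : Matrix (Fin m) (Fin m) ℂ := A.map (algebraMap ℤ ℂ) with hCdef
  have hC : C.charpoly = A.charpoly.map (algebraMap ℤ ℂ) := Matrix.charpoly_map A _
  have hCn : C ^ n = (A ^ n).map (algebraMap ℤ ℂ) := by
    rw [hCdef, ← RingHom.mapMatrix_apply, ← RingHom.mapMatrix_apply, map_pow]
  have htr : ((C ^ n)).trace = (((A ^ n).trace : ℤ) : ℂ) := by
    rw [hCn, ← RingHom.mapMatrix_apply, Matrix.trace]
    simp [Matrix.trace, Matrix.diag, map_sum]
  have hsum : (C ^ n).trace = ((C ^ n).charpoly).roots.sum :=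
    Matrix.trace_eq_sum_roots_charpoly _
  have hroot_bound : ∀ z ∈ ((C ^ n).charpoly).roots, ‖z‖ ≤ B ^ n := by
    intro z hz
    have hz' : (C ^ n).charpoly.IsRoot z :=
      (Polynomial.mem_roots ((Matrix.charpoly_monic _).ne_zero)).mp hz
    have : z ∈ spectrum ℂ (C ^ n) := (aux_isRoot_charpoly_iff_mem_spectrum _ _).mp hz'
    rw [spectrum.map_pow_of_pos C hn] at this
    obtain ⟨w, hw, rfl⟩ := this
    have hwr : C.charpoly.IsRoot w := (aux_isRoot_charpoly_iff_mem_spectrum _ _).mpr hw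
    rw [hC] at hwr
    have hwB := hroots w hwr
    calc ‖w ^ n‖ = ‖w‖ ^ n := norm_pow _ _
    _ ≤ B ^ n := pow_le_pow_left₀ (norm_nonneg w) hwB n
  have hcard : ((C ^ n).charpoly).roots.card = m := by
    rw [(Polynomial.splits_iff_card_roots).mp (IsAlgClosed.splits _),
      Matrix.charpoly_natDegree_eq_dim, Fintype.card_fin]
  calc ‖(((A ^ n).trace : ℤ) : ℂ)‖ = ‖(((C ^ n).charpoly).roots.sum)‖ := by
        rw [← htr, hsum]
  _ ≤ (((C ^ n).charpoly).roots.map (fun z : ℂ => ‖z‖)).sum := by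
        refine Multiset.le_sum_of_subadditive (fun z : ℂ => ‖z‖) norm_zero.le (fun a b => ?_) _
        exact norm_add_le a b
  _ ≤ (((C ^ n).charpoly).roots.map (fun z : ℂ => ‖z‖)).card • (B ^ n) := by
        refine Multiset.sum_le_card_nsmul _ _ ?_
        intro x hx
        obtain ⟨z, hz, rfl⟩ := Multiset.mem_map.mp hx
        exact hroot_bound z hz
  _ = m * B ^ n := by rw [Multiset.card_map, hcard]; simp [nsmul_eq_mul]

/-- Reachability: if some power of `A` has positive `(j,i)` entry then some power
`q ≤ m` does. -/
lemma aux_reach {m : ℕ} {A : Matrix (Fin m) (Fin m) ℤ} (hA : ∀ i j, 0 ≤ A i j)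
    (i j : Fin m) (k : ℕ) (hk : 0 < (A ^ k) j i) :
    ∃ q, q ≤ m ∧ 0 < (A ^ q) j i := by
  set N : Matrix (Fin m) (Fin m) ℤ := 1 + A with hNdef
  have hN : ∀ a b, 0 ≤ N a b := by
    intro a b
    have h1 : (0:ℤ) ≤ (1 : Matrix (Fin m) (Fin m) ℤ) a b := by
      by_cases h : a = b <;> simp [Matrix.one_apply, h]
    exact add_nonneg h1 (hA a b)
  have hNpow : ∀ n a b, 0 ≤ (N ^ n) a b := aux_pow_entry_nonneg hN
  have hAN : ∀ n a b, (A ^ n) a b ≤ (N ^ n) a b := by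
    intro n
    induction n with
    | zero => intro a b; exact le_refl _
    | succ n ih =>
      intro a b
      have h1 : (A ^ (n+1)) a b ≤ (N ^ n * A) a b := by
        rw [pow_succ, Matrix.mul_apply, Matrix.mul_apply]
        exact Finset.sum_le_sum fun l _ =>
          mul_le_mul_of_nonneg_right (ih a l) (hA l b)
      have h2 : (N ^ (n+1)) a b = (N ^ n) a b + (N ^ n * A) a b := by
        rw [pow_succ, hNdef, mul_add, mul_one, Matrix.add_apply]
      rw [h2]
      have := hNpow n a b
      linarith
  classical
  set R : ℕ → Finset (Fin m) := fun r => Finset.univ.filter (fun l => 0 < (N ^ r) l i) with hRdef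
  have hmemR : ∀ r l, l ∈ R r ↔ 0 < (N ^ r) l i := by
    intro r l; simp [hRdef]
  have hdet : ∀ r l, l ∈ R (r+1) ↔ ∃ c ∈ R r, 0 < N l c := by
    intro r l
    rw [hmemR]
    have hexp : (N ^ (r+1)) l i = ∑ c, N l c * (N ^ r) c i := by
      rw [pow_succ', Matrix.mul_apply]
    rw [hexp]
    constructor
    · intro hpos
      by_contra hcon
      push_neg at hcon
      have hz : ∀ c ∈ Finset.univ, N l c * (N ^ r) c i ≤ 0 := by
        intro c _
        rcases (hN l c).lt_or_eq with h1 | h1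
        · have hc : ¬ 0 < (N ^ r) c i := fun hh => hcon c ((hmemR r c).mpr hh) |>.not_gt h1
          have : (N ^ r) c i = 0 := le_antisymm (not_lt.mp hc) (hNpow r c i)
          simp [this]
        · simp [← h1]
      have := Finset.sum_nonpos hz
      linarith
    · rintro ⟨c, hc, hlc⟩
      refine Finset.sum_pos' (fun x _ => mul_nonneg (hN l x) (hNpow r x i)) ⟨c, Finset.mem_univ c, ?_⟩
      exact mul_pos hlc ((hmemR r c).mp hc)
  have hmono : ∀ r, R r ⊆ R (r+1) := by
    intro r l hl
    have hdiag : 0 < N l l := by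
      have : N l l = 1 + A l l := by simp [hNdef, Matrix.add_apply, Matrix.one_apply]
      rw [this]; linarith [hA l l]
    exact (hdet r l).mpr ⟨l, hl, hdiag⟩
  have hmono' : ∀ r s, r ≤ s → R r ⊆ R s := by
    intro r s hrs
    induction s with
    | zero => simp at hrs; subst hrs; exact Finset.Subset.refl _
    | succ s ih =>
      rcases Nat.lt_or_ge r (s+1) with h | h
      · exact (ih (Nat.lt_succ_iff.mp h)).trans (hmono s)
      · have : r = s + 1 := le_antisymm hrs h
        subst this; exact Finset.Subset.refl _
  have hstab : ∀ r, R (r+1) = R r → ∀ s, R (r+s) = R r := by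
    intro r hr s
    induction s with
    | zero => rfl
    | succ s ih =>
      have : R (r + s + 1) = R (r + 1) := by
        ext l
        rw [hdet, hdet]
        constructor <;> rintro ⟨c, hc, h⟩
        · exact ⟨c, ih ▸ hc, h⟩
        · exact ⟨c, ih ▸ hc, h⟩
      rw [show r + (s+1) = r + s + 1 from rfl, this, hr]
  have hiR : ∀ r, i ∈ R r := by
    intro r
    have h0 : i ∈ R 0 := by
      rw [hmemR]; simp [Matrix.one_apply]
    exact hmono' 0 r (Nat.zero_le r) h0
  have hRm : ∀ r, R r ⊆ R m := by
    by_cases hex : ∃ t, t < m ∧ R (t+1) = R t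
    · obtain ⟨t, htm, ht⟩ := hex
      intro r
      rcases le_or_gt r m with h | h
      · exact hmono' r m h
      · have h1 : R r = R t := by
          have : r = t + (r - t) := by omega
          rw [this]; exact hstab t ht _
        rw [h1]
        exact hmono' t m (le_of_lt htm)
    · exfalso
      push_neg at hex
      have hcard : ∀ t, t ≤ m → t + 1 ≤ (R t).card := by
        intro t
        induction t with
        | zero => intro _; have := hiR 0; exact Finset.card_pos.mpr ⟨i, this⟩
        | succ t ih =>
          intro htm
          have h1 := ih (by omega)
          have hne : R (t+1) ≠ R t := hex t (by omega)
          have hss : R t ⊂ R (t+1) :=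
            Finset.ssubset_iff_subset_ne.mpr ⟨hmono t, fun h => hne h.symm⟩
          have := Finset.card_lt_card hss
          omega
      have h1 := hcard m (le_refl m)
      have h2 : (R m).card ≤ m := le_trans (Finset.card_le_card (Finset.subset_univ _)) (by simp)
      omega
  have hdown : ∀ r a b, 0 < (N ^ r) a b → ∃ q, q ≤ r ∧ 0 < (A ^ q) a b := by
    intro r
    induction r with
    | zero => intro a b h; exact ⟨0, le_refl 0, h⟩
    | succ r ih =>
      intro a b h
      have hsplit : (N ^ (r+1)) a b = (N ^ r) a b + (A * N ^ r) a b := by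
        rw [pow_succ', hNdef, add_mul, one_mul, Matrix.add_apply]
      rw [hsplit] at h
      rcases lt_or_ge 0 ((N ^ r) a b) with h1 | h1
      · obtain ⟨q, hq, hq2⟩ := ih a b h1
        exact ⟨q, le_trans hq (Nat.le_succ r), hq2⟩
      · have h2 : 0 < (A * N ^ r) a b := by
          have := hNpow r a b
          have hnr : (N ^ r) a b = 0 := le_antisymm h1 this
          rw [hnr] at h; simpa using h
        rw [Matrix.mul_apply] at h2
        obtain ⟨l, _, hl⟩ : ∃ l ∈ Finset.univ, 0 < A a l * (N ^ r) l b := by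
          by_contra hcon
          push_neg at hcon
          have := Finset.sum_nonpos hcon
          linarith
        obtain ⟨h3, h4⟩ := aux_pos_pos_of_mul_pos (hA a l) (hNpow r l b) hl
        obtain ⟨q, hq, hq2⟩ := ih l b h4
        refine ⟨q + 1, by omega, ?_⟩
        rw [pow_succ', Matrix.mul_apply]
        refine Finset.sum_pos' (fun x _ => mul_nonneg (hA a x) (aux_pow_entry_nonneg hA q x b))
          ⟨l, Finset.mem_univ l, mul_pos h3 hq2⟩
  have hjRk : j ∈ R k := (hmemR k j).mpr (lt_of_lt_of_le hk (hAN k j i))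
  have hjRm : 0 < (N ^ m) j i := (hmemR m j).mp (hRm k hjRk)
  exact hdown m j i hjRm

lemma aux_entry_bound {m : ℕ} (hm : 2 ≤ m) {B : ℝ} (hB : 0 < B)
    {A : Matrix (Fin m) (Fin m) ℤ} (hA : ∀ i j, 0 ≤ A i j)
    (hroots : ∀ z : ℂ, ((A.charpoly).map (algebraMap ℤ ℂ)).IsRoot z → ‖z‖ ≤ B)
    {k : ℕ} (hk : 0 < k) (hprim : ∀ i j, 0 < (A ^ k) i j) :
    1 ≤ B ∧ ∀ i j, (A i j : ℝ) ≤ m * B ^ (m + 2) := by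
  have htr : ∀ n, 0 < n → (((A ^ n).trace : ℤ) : ℝ) ≤ m * B ^ n := by
    intro n hn
    have h1 := aux_trace_pow_bound A B hroots n hn
    calc (((A ^ n).trace : ℤ) : ℝ) ≤ |(((A ^ n).trace : ℤ) : ℝ)| := le_abs_self _
    _ = ‖(((A ^ n).trace : ℤ) : ℂ)‖ := by
        rw [Complex.norm_intCast]
    _ ≤ m * B ^ n := h1
  have hB1 : 1 ≤ B := by
    by_contra hc
    push_neg at hc
    have h1 : (((A ^ k).trace : ℤ) : ℝ) ≤ m * B ^ k := htr k hk
    have h2 : (m : ℤ) ≤ (A ^ k).trace := by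
      calc (m : ℤ) = ∑ _i : Fin m, 1 := by simp
      _ ≤ ∑ i, (A ^ k) i i := Finset.sum_le_sum fun i _ => hprim i i
      _ = (A ^ k).trace := by simp [Matrix.trace, Matrix.diag]
    have h3 : B ^ k < 1 := pow_lt_one₀ (le_of_lt hB) hc (by omega)
    have hmpos : (0:ℝ) < m := by positivity
    have h4 : (m:ℝ) ≤ m * B ^ k := le_trans (by exact_mod_cast h2) h1
    nlinarith
  refine ⟨hB1, ?_⟩
  intro i j
  obtain ⟨q', hq'1, hq'2, hq'pos⟩ : ∃ q', 1 ≤ q' ∧ q' ≤ m + 1 ∧ 0 < (A ^ q') j i := by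
    obtain ⟨q, hq, hqpos⟩ := aux_reach hA i j k (hprim j i)
    rcases Nat.eq_zero_or_pos q with rfl | hqpos'
    · have hji : j = i := by
        by_contra hne
        rw [pow_zero] at hqpos
        simp [Matrix.one_apply, hne] at hqpos
      subst hji
      obtain ⟨k', rfl⟩ : ∃ k', k = k' + 1 := ⟨k - 1, by omega⟩
      have hsplit : 0 < (A * A ^ k') j j := by rw [← pow_succ']; exact hprim j j
      rw [Matrix.mul_apply] at hsplit
      obtain ⟨l, _, hl⟩ : ∃ l ∈ Finset.univ, 0 < A j l * (A ^ k') l j := by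
        by_contra hcon
        push_neg at hcon
        have := Finset.sum_nonpos hcon
        linarith
      obtain ⟨hl1, hl2⟩ := aux_pos_pos_of_mul_pos (hA j l) (aux_pow_entry_nonneg hA k' l j) hl
      obtain ⟨r, hr, hrpos⟩ := aux_reach hA j l k' hl2
      refine ⟨r + 1, by omega, by omega, ?_⟩
      rw [pow_succ', Matrix.mul_apply]
      exact Finset.sum_pos' (fun x _ => mul_nonneg (hA j x) (aux_pow_entry_nonneg hA r x j))
        ⟨l, Finset.mem_univ l, mul_pos hl1 hrpos⟩
    · exact ⟨q, hqpos', by omega, hqpos⟩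
  have hone : (1:ℤ) ≤ (A ^ q') j i := hq'pos
  have hstep : A i j ≤ (A ^ (q' + 1)) i i := by
    have h1 : A i j * 1 ≤ A i j * (A ^ q') j i := mul_le_mul_of_nonneg_left hone (hA i j)
    have h2 : A i j * (A ^ q') j i ≤ ∑ l, A i l * (A ^ q') l i :=
      Finset.single_le_sum (f := fun l => A i l * (A ^ q') l i)
        (fun l _ => mul_nonneg (hA i l) (aux_pow_entry_nonneg hA q' l i)) (Finset.mem_univ j)
    calc A i j = A i j * 1 := (mul_one _).symm
    _ ≤ ∑ l, A i l * (A ^ q') l i := le_trans h1 h2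
    _ = (A ^ (q' + 1)) i i := by rw [pow_succ', Matrix.mul_apply]
  have hdiag : (A ^ (q' + 1)) i i ≤ (A ^ (q' + 1)).trace := by
    have : (A ^ (q' + 1)).trace = ∑ l, (A ^ (q' + 1)) l l := by simp [Matrix.trace, Matrix.diag]
    rw [this]
    exact Finset.single_le_sum (f := fun l => (A ^ (q' + 1)) l l)
      (fun l _ => aux_pow_entry_nonneg hA _ l l) (Finset.mem_univ i)
  have h3 := htr (q' + 1) (by omega)
  have h4 : B ^ (q' + 1) ≤ B ^ (m + 2) := pow_le_pow_right₀ hB1 (by omega)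
  have hmpos : (0:ℝ) ≤ m := by positivity
  calc (A i j : ℝ) ≤ (((A ^ (q' + 1)).trace : ℤ) : ℝ) := by
        exact_mod_cast le_trans hstep hdiag
  _ ≤ m * B ^ (q' + 1) := h3
  _ ≤ m * B ^ (m + 2) := by nlinarith

/-- base-`m`-ish encoding of lists -/
def auxEnc {m : ℕ} : List (Fin m) → ℕ
  | [] => 0
  | d :: t => (d : ℕ) + 1 + m * auxEnc t

lemma aux_base_inj {m d d' e e' : ℕ} (hd : d < m) (hd' : d' < m)
    (h : d + m * e = d' + m * e') : d = d' ∧ e = e' := by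
  rcases lt_trichotomy e e' with he | he | he
  · exfalso
    have h1 : m * e + m ≤ m * e' := by
      calc m * e + m = m * (e + 1) := by ring
      _ ≤ m * e' := Nat.mul_le_mul_left m (Nat.succ_le_of_lt he)
    omega
  · subst he; omega
  · exfalso
    have h1 : m * e' + m ≤ m * e := by
      calc m * e' + m = m * (e' + 1) := by ring
      _ ≤ m * e := Nat.mul_le_mul_left m (Nat.succ_le_of_lt he)
    omega

lemma auxEnc_inj {m : ℕ} : ∀ l l' : List (Fin m), auxEnc l = auxEnc l' → l = l' := by
  intro l
  induction l with
  | nil =>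
    intro l' h
    cases l' with
    | nil => rfl
    | cons d t => simp only [auxEnc] at h; omega
  | cons d t ih =>
    intro l' h
    cases l' with
    | nil => simp only [auxEnc] at h; omega
    | cons d' t' =>
      simp only [auxEnc] at h
      have h' : (d : ℕ) + m * auxEnc t = (d' : ℕ) + m * auxEnc t' := by omega
      obtain ⟨h1, h2⟩ := aux_base_inj d.isLt d'.isLt h'
      rw [Fin.val_eq_val] at h1
      rw [h1, ih t' h2]

lemma auxEnc_bound {m : ℕ} (hm : 2 ≤ m) :
    ∀ l : List (Fin m), (m - 1) * auxEnc l + m ≤ m ^ (l.length + 1) := by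
  obtain ⟨c, rfl⟩ : ∃ c, m = c + 1 := ⟨m - 1, by omega⟩
  intro l
  induction l with
  | nil => simp [auxEnc]
  | cons d t ih =>
    simp only [auxEnc, List.length_cons]
    have hd : (d : ℕ) + 1 ≤ c + 1 := d.isLt
    have hsimp : (c + 1) - 1 = c := by omega
    rw [hsimp] at ih ⊢
    calc c * ((d : ℕ) + 1 + (c + 1) * auxEnc t) + (c + 1)
        ≤ c * ((c + 1) + (c + 1) * auxEnc t) + (c + 1) := by
          have := Nat.mul_le_mul_left c (Nat.add_le_add_right hd ((c+1) * auxEnc t))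
          omega
    _ = (c + 1) * (c * auxEnc t + (c + 1)) := by ring
    _ ≤ (c + 1) * (c + 1) ^ (t.length + 1) := Nat.mul_le_mul_left _ ih
    _ = (c + 1) ^ (t.length + 1 + 1) := by ring

lemma auxEnc_lt {m L : ℕ} (hm : 2 ≤ m) (l : List (Fin m)) (hl : l.length ≤ L) :
    auxEnc l < m ^ (L + 1) := by
  have h1 := auxEnc_bound hm l
  have h2 : auxEnc l ≤ (m - 1) * auxEnc l := Nat.le_mul_of_pos_left _ (by omega)
  have h3 : m ^ (l.length + 1) ≤ m ^ (L + 1) :=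
    Nat.pow_le_pow_right (by omega) (by omega)
  omega

end Aux

/-- The set of primitive substitutions over `m` letters whose incidence matrix has all
complex eigenvalues of modulus at most `B` is finite, of cardinality less than
`m ^ (m^4 * B^(2*(m-1)^2+2))`. -/
theorem stmt_0 (m : ℕ) (hm : 2 ≤ m) (B : ℝ) (hB : 0 < B)
    (S : Set (Fin m → List (Fin m)))
    (hS : S = {σ : Fin m → List (Fin m) |
      (∀ a, σ a ≠ []) ∧
      (∃ k : ℕ, 0 < k ∧ ∀ i j,
        0 < (((Matrix.of fun (i j : Fin m) => ((σ j).count i : ℤ)) ^ k) i j)) ∧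
      (∀ z : ℂ,
        ((Matrix.of fun (i j : Fin m) => ((σ j).count i : ℤ)).charpoly.map
          (algebraMap ℤ ℂ)).IsRoot z → ‖z‖ ≤ B)}) :
    S.Finite ∧
      (S.ncard : ℝ) < (m : ℝ) ^ ((m : ℝ) ^ 4 * B ^ (2 * (m - 1) ^ 2 + 2)) := by
  classical
  have hm0 : (0:ℝ) < m := by positivity
  have hm1 : (1:ℝ) < m := by exact_mod_cast (by omega : 1 < m)
  have hm2 : (2:ℝ) ≤ m := by exact_mod_cast hm
  rcases S.eq_empty_or_nonempty with hemp | ⟨σ₀, hσ₀⟩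
  · subst hS
    rw [hemp]
    refine ⟨Set.finite_empty, ?_⟩
    rw [Set.ncard_empty]
    push_cast
    exact Real.rpow_pos_of_pos hm0 _
  · subst hS
    -- B ≥ 1 via the witness σ₀
    obtain ⟨hne₀, ⟨k₀, hk₀, hprim₀⟩, hroots₀⟩ := hσ₀
    have hB1 : 1 ≤ B := by
      have hA₀ : ∀ i j, 0 ≤ (Matrix.of fun (i j : Fin m) => ((σ₀ j).count i : ℤ)) i j :=
        fun i j => Int.natCast_nonneg _
      exact (aux_entry_bound hm hB hA₀ hroots₀ hk₀ hprim₀).1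
    set L : ℕ := ⌊(m:ℝ) ^ 2 * B ^ (m + 2)⌋₊ with hL
    -- every word of every substitution in S has length ≤ L
    have hlen : ∀ σ : Fin m → List (Fin m), σ ∈
        {σ : Fin m → List (Fin m) |
          (∀ a, σ a ≠ []) ∧
          (∃ k : ℕ, 0 < k ∧ ∀ i j,
            0 < (((Matrix.of fun (i j : Fin m) => ((σ j).count i : ℤ)) ^ k) i j)) ∧
          (∀ z : ℂ,
            ((Matrix.of fun (i j : Fin m) => ((σ j).count i : ℤ)).charpoly.map
              (algebraMap ℤ ℂ)).IsRoot z → ‖z‖ ≤ B)} →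
        ∀ a, (σ a).length ≤ L := by
      intro σ hσ a
      obtain ⟨hne, ⟨k, hk, hprim⟩, hroots⟩ := hσ
      have hA : ∀ i j, 0 ≤ (Matrix.of fun (i j : Fin m) => ((σ j).count i : ℤ)) i j :=
        fun i j => Int.natCast_nonneg _
      obtain ⟨_, hent⟩ := aux_entry_bound hm hB hA hroots hk hprim
      have hsum : ∑ i : Fin m, (σ a).count i = (σ a).length := by
        have h1 : ∑ i ∈ (Finset.univ : Finset (Fin m)), Multiset.count i ((σ a) : Multiset (Fin m))
            = Multiset.card ((σ a) : Multiset (Fin m)) :=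
          Multiset.sum_count_eq_card (fun x _ => Finset.mem_univ x)
        simpa using h1
      have h2 : ((σ a).length : ℝ) ≤ (m:ℝ) * ((m:ℝ) * B ^ (m + 2)) := by
        rw [← hsum]
        push_cast
        calc ∑ i : Fin m, ((σ a).count i : ℝ)
            ≤ ∑ _i : Fin m, (m:ℝ) * B ^ (m + 2) := by
              refine Finset.sum_le_sum fun i _ => ?_
              have := hent i a
              simpa using this
        _ = (m:ℝ) * ((m:ℝ) * B ^ (m + 2)) := by
              rw [Finset.sum_const, Finset.card_univ, Fintype.card_fin, nsmul_eq_mul]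
      refine Nat.le_floor ?_
      calc ((σ a).length : ℝ) ≤ (m:ℝ) * ((m:ℝ) * B ^ (m + 2)) := h2
      _ = (m:ℝ) ^ 2 * B ^ (m + 2) := by ring
    -- injection into a finite type
    set T := {σ : Fin m → List (Fin m) |
      (∀ a, σ a ≠ []) ∧
      (∃ k : ℕ, 0 < k ∧ ∀ i j,
        0 < (((Matrix.of fun (i j : Fin m) => ((σ j).count i : ℤ)) ^ k) i j)) ∧
      (∀ z : ℂ,
        ((Matrix.of fun (i j : Fin m) => ((σ j).count i : ℤ)).charpoly.map
          (algebraMap ℤ ℂ)).IsRoot z → ‖z‖ ≤ B)} with hT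
    have hφ : ∃ φ : T → (Fin m → Fin (m ^ (L + 1))), Function.Injective φ := by
      refine ⟨fun σs a => ⟨auxEnc (σs.1 a), auxEnc_lt hm _ (hlen σs.1 σs.2 a)⟩, ?_⟩
      intro σs τs h
      apply Subtype.ext
      funext a
      have h1 := congrFun h a
      rw [Fin.mk.injEq] at h1
      exact auxEnc_inj _ _ h1
    obtain ⟨φ, hφinj⟩ := hφ
    have hfinT : Finite T := Finite.of_injective φ hφinj
    have hfin : T.Finite := Set.finite_coe_iff.mp hfinT
    refine ⟨hfin, ?_⟩
    -- cardinality bound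
    have hcard1 : T.ncard ≤ (m ^ (L + 1)) ^ m := by
      rw [← Nat.card_coe_set_eq]
      calc Nat.card T ≤ Nat.card (Fin m → Fin (m ^ (L + 1))) :=
            Nat.card_le_card_of_injective φ hφinj
      _ = (m ^ (L + 1)) ^ m := by
            simp [Nat.card_eq_fintype_card, Fintype.card_fun]
    have hLreal : (L : ℝ) ≤ (m:ℝ) ^ 2 * B ^ (m + 2) := Nat.floor_le (by positivity)
    set E : ℕ := 2 * (m - 1) ^ 2 + 2 with hE
    have hmE : m + 2 ≤ E := by
      have h2 : m - 1 ≤ (m - 1) ^ 2 := Nat.le_self_pow two_ne_zero _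
      rw [hE]; omega
    have hBm : B ^ (m + 2) ≤ B ^ E := pow_le_pow_right₀ hB1 hmE
    have hBE1 : (1:ℝ) ≤ B ^ E := one_le_pow₀ hB1
    have hexp : (((L + 1) * m : ℕ) : ℝ) < (m:ℝ) ^ 4 * B ^ E := by
      push_cast
      have h1 : (L : ℝ) ≤ (m:ℝ) ^ 2 * B ^ E := by
        calc (L : ℝ) ≤ (m:ℝ) ^ 2 * B ^ (m + 2) := hLreal
        _ ≤ (m:ℝ) ^ 2 * B ^ E := by nlinarith
      have h2 : ((L:ℝ) + 1) * m ≤ (m:ℝ) ^ 3 * B ^ E + m := by nlinarith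
      have h3 : (m:ℝ) < (m:ℝ) ^ 3 * B ^ E := by nlinarith
      have h4 : 2 * (m:ℝ) ^ 3 ≤ (m:ℝ) ^ 4 := by nlinarith
      nlinarith
    calc (T.ncard : ℝ) ≤ (((m ^ (L + 1)) ^ m : ℕ) : ℝ) := by exact_mod_cast hcard1
    _ = (m : ℝ) ^ (((L + 1) * m : ℕ) : ℝ) := by
          rw [Real.rpow_natCast]
          push_cast
          rw [← pow_mul]
    _ < (m : ℝ) ^ ((m : ℝ) ^ 4 * B ^ E) := by
          rw [Real.rpow_lt_rpow_left_iff hm1]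
          exact hexp
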